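/- arXiv:2308.06059 — 2 statements merged into one kernel-verified Lean document; each statement's English description precedes it below -/
import Mathlib

section
/- Let ω > 0 be a real number and n ≥ 1 an integer. Then for every z ∈ ℂ, S_n^{ω+1}(z) = S_n^ω(z) + (n²/((ω+n)(ω+n+1)))·S_{n−1}^ω(z). -/
open Finset Polynomial

/-- The monic skyburst polynomial
`S_n^ω(z) = Σ_{ℓ=0}^n binom(n,ℓ) · (−ω)_ℓ/(−n−ω)_ℓ · z^{n−ℓ}`,
where `(a)_ℓ` is the Pochhammer (rising factorial) symbol. -/
noncomputable def skyburst (n : ℕ) (ω : ℝ) (z : ℂ) : ℂ :=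
  ∑ ℓ ∈ Finset.range (n + 1),
    (n.choose ℓ : ℂ) *
      ((ascPochhammer ℂ ℓ).eval (-(ω : ℂ)) / (ascPochhammer ℂ ℓ).eval (-(n : ℂ) - (ω : ℂ))) *
      z ^ (n - ℓ)

lemma asc_eval_prod (m : ℕ) (x : ℂ) :
    (ascPochhammer ℂ m).eval x = ∏ i ∈ Finset.range m, (x + i) := by
  induction m with
  | zero => simp
  | succ m ih => rw [ascPochhammer_succ_eval, ih, Finset.prod_range_succ]

lemma asc_eval_succ_left (m : ℕ) (x : ℂ) :
    (ascPochhammer ℂ (m+1)).eval x = x * (ascPochhammer ℂ m).eval (x+1) := by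
  rw [ascPochhammer_succ_left]
  simp [eval_comp]

lemma asc_ne_zero (m : ℕ) (x : ℝ) (hx : x + m ≤ 0) :
    (ascPochhammer ℂ m).eval (x : ℂ) ≠ 0 := by
  rw [asc_eval_prod]
  refine Finset.prod_ne_zero_iff.2 fun i hi => ?_
  simp only [Finset.mem_range] at hi
  have : ((x : ℂ) + i) = ((x + i : ℝ) : ℂ) := by push_cast; ring
  rw [this, Complex.ofReal_ne_zero]
  have hi1 : ((i + 1 : ℕ) : ℝ) ≤ m := Nat.cast_le.2 (Nat.succ_le_of_lt hi)
  push_cast at hi1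
  nlinarith

lemma scalar_key (C W M Nn N E : ℂ) (hE : E ≠ 0) (hwn : W+Nn ≠ 0) (hwn1 : W+Nn+1 ≠ 0)
    (hnW1 : -Nn-(W+1) ≠ 0) (hmn : -Nn-W+M ≠ 0) (hn0 : Nn ≠ 0) :
    C * (-(W+1) * N / ((-Nn-(W+1)) * E)) =
      C * (N*(-W+M) / (E*(-Nn-W+M))) +
        Nn^2/((W+Nn)*(W+Nn+1)) * (C*(M+1)/Nn * (N*(-Nn-W)/(E*(-Nn-W+M)))) := by
  have hB1 : (-Nn-(W+1)) * E ≠ 0 := mul_ne_zero hnW1 hE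
  have hB2 : E*(-Nn-W+M) ≠ 0 := mul_ne_zero hE hmn
  have hB3 : ((W+Nn)*(W+Nn+1)) * (Nn * (E*(-Nn-W+M))) ≠ 0 :=
    mul_ne_zero (mul_ne_zero hwn hwn1) (mul_ne_zero hn0 hB2)
  rw [mul_div_assoc', mul_div_assoc', div_mul_div_comm, div_mul_div_comm,
    div_add_div _ _ hB2 hB3, div_eq_div_iff hB1 (mul_ne_zero hB2 hB3)]
  ring

set_option maxHeartbeats 1000000 in
lemma skyburst_key (ω : ℝ) (hω : 0 < ω) (n m : ℕ) (hm : m < n) :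
    (n.choose (m+1) : ℂ) *
      ((ascPochhammer ℂ (m+1)).eval (-((ω:ℂ) + 1)) /
        (ascPochhammer ℂ (m+1)).eval (-(n:ℂ) - ((ω:ℂ) + 1))) =
    (n.choose (m+1) : ℂ) *
      ((ascPochhammer ℂ (m+1)).eval (-(ω:ℂ)) /
        (ascPochhammer ℂ (m+1)).eval (-(n:ℂ) - (ω:ℂ))) +
    ((n:ℂ)^2 / (((ω:ℂ) + (n:ℂ)) * ((ω:ℂ) + (n:ℂ) + 1))) *
      (((n-1).choose m : ℂ) *
      ((ascPochhammer ℂ m).eval (-(ω:ℂ)) /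
        (ascPochhammer ℂ m).eval (-((n:ℂ) - 1) - (ω:ℂ)))) := by
  have hmr : (m:ℝ) < n := by exact_mod_cast hm
  have hm1 : (m:ℝ) + 1 ≤ n := by exact_mod_cast hm
  have hn0 : (n:ℂ) ≠ 0 := Nat.cast_ne_zero.2 (by omega)
  have hEm : (ascPochhammer ℂ m).eval (-(n:ℂ) - (ω:ℂ)) ≠ 0 := by
    rw [show (-(n:ℂ) - (ω:ℂ)) = ((-(n:ℝ) - ω : ℝ) : ℂ) by push_cast; ring]
    exact asc_ne_zero _ _ (by linarith)
  have hD : (ascPochhammer ℂ m).eval (-((n:ℂ) - 1) - (ω:ℂ)) ≠ 0 := by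
    rw [show (-((n:ℂ) - 1) - (ω:ℂ)) = ((1 - (n:ℝ) - ω : ℝ) : ℂ) by push_cast; ring]
    exact asc_ne_zero _ _ (by linarith)
  have hwn : (ω:ℂ) + (n:ℂ) ≠ 0 := by
    rw [show ((ω:ℂ) + (n:ℂ)) = ((ω + n : ℝ) : ℂ) by push_cast; ring]
    exact Complex.ofReal_ne_zero.2 (by positivity)
  have hwn1 : (ω:ℂ) + (n:ℂ) + 1 ≠ 0 := by
    rw [show ((ω:ℂ) + (n:ℂ) + 1) = ((ω + n + 1 : ℝ) : ℂ) by push_cast; ring]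
    exact Complex.ofReal_ne_zero.2 (by positivity)
  have hnW : -(n:ℂ) - (ω:ℂ) ≠ 0 := by
    intro h; exact hwn (by linear_combination -h)
  have hnW1 : -(n:ℂ) - ((ω:ℂ) + 1) ≠ 0 := by
    intro h; exact hwn1 (by linear_combination -h)
  have hmnW : -(n:ℂ) - (ω:ℂ) + (m:ℂ) ≠ 0 := by
    rw [show (-(n:ℂ) - (ω:ℂ) + (m:ℂ)) = (((m:ℝ) - n - ω : ℝ) : ℂ) by push_cast; ring]
    exact Complex.ofReal_ne_zero.2 (by intro h; nlinarith)
  have hch : (n:ℂ) * ((n-1).choose m : ℂ) = (n.choose (m+1) : ℂ) * ((m:ℂ) + 1) := by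
    have h := Nat.add_one_mul_choose_eq (n-1) m
    rw [Nat.sub_add_cancel (by omega : 1 ≤ n)] at h
    exact_mod_cast h
  have h1 : (ascPochhammer ℂ (m+1)).eval (-((ω:ℂ) + 1)) =
      (-((ω:ℂ) + 1)) * (ascPochhammer ℂ m).eval (-(ω:ℂ)) := by
    rw [asc_eval_succ_left, show (-((ω:ℂ) + 1) + 1) = -(ω:ℂ) by ring]
  have h2 : (ascPochhammer ℂ (m+1)).eval (-(n:ℂ) - ((ω:ℂ) + 1)) =
      (-(n:ℂ) - ((ω:ℂ) + 1)) * (ascPochhammer ℂ m).eval (-(n:ℂ) - (ω:ℂ)) := by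
    rw [asc_eval_succ_left, show (-(n:ℂ) - ((ω:ℂ) + 1) + 1) = -(n:ℂ) - (ω:ℂ) by ring]
  have h3 : (ascPochhammer ℂ (m+1)).eval (-(ω:ℂ)) =
      (ascPochhammer ℂ m).eval (-(ω:ℂ)) * (-(ω:ℂ) + (m:ℂ)) := ascPochhammer_succ_eval m _
  have h5 : (ascPochhammer ℂ (m+1)).eval (-(n:ℂ) - (ω:ℂ)) =
      (-(n:ℂ) - (ω:ℂ)) * (ascPochhammer ℂ m).eval (-((n:ℂ) - 1) - (ω:ℂ)) := by
    rw [asc_eval_succ_left, show (-(n:ℂ) - (ω:ℂ) + 1) = -((n:ℂ) - 1) - (ω:ℂ) by ring]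
  have h4 : (ascPochhammer ℂ (m+1)).eval (-(n:ℂ) - (ω:ℂ)) =
      (ascPochhammer ℂ m).eval (-(n:ℂ) - (ω:ℂ)) * (-(n:ℂ) - (ω:ℂ) + (m:ℂ)) :=
    ascPochhammer_succ_eval m _
  have hDeq : (ascPochhammer ℂ m).eval (-((n:ℂ) - 1) - (ω:ℂ)) =
      (ascPochhammer ℂ m).eval (-(n:ℂ) - (ω:ℂ)) * (-(n:ℂ) - (ω:ℂ) + (m:ℂ)) /
        (-(n:ℂ) - (ω:ℂ)) := by
    rw [eq_div_iff hnW]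
    linear_combination h4 - h5
  have hcheq : ((n-1).choose m : ℂ) = (n.choose (m+1) : ℂ) * ((m:ℂ) + 1) / (n:ℂ) := by
    rw [eq_div_iff hn0]
    linear_combination hch
  have hc : (-(n:ℂ) - (ω:ℂ)) * (ascPochhammer ℂ m).eval (-((n:ℂ) - 1) - (ω:ℂ)) =
      (ascPochhammer ℂ m).eval (-(n:ℂ) - (ω:ℂ)) * (-(n:ℂ) - (ω:ℂ) + (m:ℂ)) :=
    h5.symm.trans h4
  have hfr : (ascPochhammer ℂ m).eval (-(ω:ℂ)) /
        (ascPochhammer ℂ m).eval (-((n:ℂ) - 1) - (ω:ℂ)) =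
      (ascPochhammer ℂ m).eval (-(ω:ℂ)) * (-(n:ℂ) - (ω:ℂ)) /
        ((ascPochhammer ℂ m).eval (-(n:ℂ) - (ω:ℂ)) * (-(n:ℂ) - (ω:ℂ) + (m:ℂ))) := by
    rw [div_eq_div_iff hD (mul_ne_zero hEm hmnW)]
    linear_combination (-(ascPochhammer ℂ m).eval (-(ω:ℂ))) * hc
  rw [h1, h2, h3, h4, hcheq, hfr]
  exact scalar_key _ _ _ _ _ _ hEm hwn hwn1 hnW1 hmnW hn0

theorem skyburst_parameter_lift_recurrence (ω : ℝ) (hω : 0 < ω) (n : ℕ) (hn : 1 ≤ n) (z : ℂ) :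
    skyburst n (ω + 1) z =
      skyburst n ω z +
        ((n : ℂ) ^ 2 / (((ω : ℂ) + (n : ℂ)) * ((ω : ℂ) + (n : ℂ) + 1))) *
          skyburst (n - 1) ω z := by
  unfold skyburst
  rw [show n - 1 + 1 = n by omega]
  simp only [Complex.ofReal_add, Complex.ofReal_one, Nat.cast_sub hn, Nat.cast_one]
  rw [Finset.sum_range_succ', Finset.sum_range_succ', Finset.mul_sum]
  simp only [Nat.choose_zero_right, Nat.cast_one, ascPochhammer_zero, Polynomial.eval_one,
    Nat.sub_zero, one_mul, div_one]
  have hstep : ∀ m ∈ Finset.range n,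
      (n.choose (m+1) : ℂ) *
        ((ascPochhammer ℂ (m+1)).eval (-((ω:ℂ) + 1)) /
          (ascPochhammer ℂ (m+1)).eval (-(n:ℂ) - ((ω:ℂ) + 1))) * z ^ (n - (m+1)) =
      (n.choose (m+1) : ℂ) *
        ((ascPochhammer ℂ (m+1)).eval (-(ω:ℂ)) /
          (ascPochhammer ℂ (m+1)).eval (-(n:ℂ) - (ω:ℂ))) * z ^ (n - (m+1)) +
      ((n:ℂ)^2 / (((ω:ℂ) + (n:ℂ)) * ((ω:ℂ) + (n:ℂ) + 1))) *
        (((n-1).choose m : ℂ) *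
          ((ascPochhammer ℂ m).eval (-(ω:ℂ)) /
            (ascPochhammer ℂ m).eval (-((n:ℂ) - 1) - (ω:ℂ))) * z ^ (n - 1 - m)) := by
    intro m hm
    simp only [Finset.mem_range] at hm
    rw [show n - 1 - m = n - (m+1) by omega]
    have h := skyburst_key ω hω n m hm
    linear_combination z ^ (n - (m+1)) * h
  rw [Finset.sum_congr rfl hstep, Finset.sum_add_distrib]
  ring
end

section
/- Let ω > 0 be a real number and n ≥ 1 an integer. If z̃ ∈ ℂ with z̃ ≠ 0 satisfies S_n^ω(z̃) = 0, then (d/dz)S_n^ω(z̃) ≠ 0; that is, every zero of S_n^ω other than possibly the origin is simple. -/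
open Finset Polynomial

noncomputable def skyA (n : ℕ) (ω : ℝ) (ℓ : ℕ) : ℂ :=
  (n.choose ℓ : ℂ) *
      ((ascPochhammer ℂ ℓ).eval (-(ω : ℂ)) / (ascPochhammer ℂ ℓ).eval (-(n : ℂ) - (ω : ℂ)))

lemma sky_den_ne (n : ℕ) (ω : ℝ) (hω : 0 < ω) :
    ∀ m, m ≤ n → (ascPochhammer ℂ m).eval (-(n : ℂ) - (ω : ℂ)) ≠ 0 := by
  intro m
  induction m with
  | zero => simp
  | succ m ih =>
    intro hm
    rw [ascPochhammer_succ_right]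
    simp only [eval_mul, eval_add, eval_X, eval_natCast]
    refine mul_ne_zero (ih (Nat.le_of_succ_le hm)) ?_
    intro h
    have hre := congrArg Complex.re h
    simp only [Complex.add_re, Complex.sub_re, Complex.neg_re, Complex.natCast_re,
      Complex.ofReal_re, Complex.zero_re] at hre
    have hmn : (m : ℝ) < (n : ℝ) := by exact_mod_cast Nat.lt_of_succ_le hm
    linarith

lemma sky_fac_ne (n : ℕ) (ω : ℝ) (hω : 0 < ω) (m : ℕ) (hm : m < n) :
    -(n : ℂ) - (ω : ℂ) + (m : ℂ) ≠ 0 := by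
  intro h
  have hre := congrArg Complex.re h
  simp only [Complex.add_re, Complex.sub_re, Complex.neg_re, Complex.natCast_re,
    Complex.ofReal_re, Complex.zero_re] at hre
  have hmn : (m : ℝ) < (n : ℝ) := by exact_mod_cast hm
  linarith

lemma skyA_rec (n : ℕ) (ω : ℝ) (hω : 0 < ω) (m : ℕ) (hm : m < n) :
    ((n : ℂ) - m) * ((ω : ℂ) - m) * skyA n ω m
      = ((n : ℂ) - m + ω) * ((m : ℂ) + 1) * skyA n ω (m + 1) := by
  have hD := sky_den_ne n ω hω m hm.le
  have hf := sky_fac_ne n ω hω m hm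
  have hch : ((n.choose (m+1) : ℂ)) * ((m : ℂ) + 1) = (n.choose m : ℂ) * ((n : ℂ) - m) := by
    have h := Nat.choose_succ_right_eq n m
    have h2 : ((n.choose (m+1) : ℂ)) * ((m : ℂ)+1) = (n.choose m : ℂ) * (((n - m : ℕ)) : ℂ) := by
      exact_mod_cast congrArg (Nat.cast : ℕ → ℂ) h
    rw [Nat.cast_sub hm.le] at h2
    exact h2
  rw [skyA, skyA, ascPochhammer_succ_right]
  simp only [eval_mul, eval_add, eval_X, eval_natCast]
  field_simp
  linear_combination (((n:ℂ) - m + ω) * ((ω:ℂ) - m) * (eval (-(ω:ℂ)) (ascPochhammer ℂ m))) * hch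

noncomputable def skyP (n : ℕ) (ω : ℝ) : Polynomial ℂ :=
  ∑ k ∈ Finset.range (n + 1), Polynomial.C (skyA n ω (n - k)) * X ^ k

lemma skyP_coeff (n : ℕ) (ω : ℝ) (k : ℕ) :
    (skyP n ω).coeff k = if k ≤ n then skyA n ω (n - k) else 0 := by
  rw [skyP, finset_sum_coeff]
  simp only [coeff_C_mul, coeff_X_pow, mul_ite, mul_one, mul_zero]
  rw [Finset.sum_ite_eq (Finset.range (n+1)) k (fun j => skyA n ω (n - j))]
  simp [Nat.lt_succ_iff]

lemma skyP_coeff_rec (n : ℕ) (ω : ℝ) (hω : 0 < ω) (k : ℕ) :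
    ((k : ℂ) + 1) * ((k : ℂ) + ω + 1 - n) * (skyP n ω).coeff (k + 1)
      = ((k : ℂ) + ω + 1) * ((n : ℂ) - k) * (skyP n ω).coeff k := by
  rw [skyP_coeff, skyP_coeff]
  rcases lt_or_ge k n with hk | hk
  · rw [if_pos (by omega), if_pos (by omega)]
    have h := skyA_rec n ω hω (n - (k+1)) (by omega)
    have e1 : n - (k+1) + 1 = n - k := by omega
    have e2 : ((n - (k+1) : ℕ) : ℂ) = (n : ℂ) - k - 1 := by
      push_cast [Nat.cast_sub (by omega : k + 1 ≤ n)]; ring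
    rw [e1, e2] at h
    linear_combination h
  · rw [if_neg (by omega), mul_zero]
    by_cases hkn : k ≤ n
    · have hkeq : k = n := le_antisymm hkn hk
      subst hkeq
      rw [if_pos le_rfl, sub_self]
      ring
    · rw [if_neg hkn, mul_zero]

lemma skyP_ode (n : ℕ) (ω : ℝ) (hω : 0 < ω) :
    X * (X + 1) * derivative (derivative (skyP n ω))
      + (Polynomial.C ((ω : ℂ) + 2 - n) * X + Polynomial.C ((ω : ℂ) + 1 - n))
          * derivative (skyP n ω)
    = Polynomial.C ((n : ℂ) * ((ω : ℂ) + 1)) * skyP n ω := by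
  set P := skyP n ω with hP
  have hexp : X * (X + 1) * derivative (derivative P)
      + (Polynomial.C ((ω : ℂ) + 2 - n) * X + Polynomial.C ((ω : ℂ) + 1 - n)) * derivative P
    = derivative (derivative P) * X ^ 2 + derivative (derivative P) * X ^ 1
      + Polynomial.C ((ω : ℂ) + 2 - n) * (derivative P * X ^ 1)
      + Polynomial.C ((ω : ℂ) + 1 - n) * derivative P := by ring
  rw [hexp]
  ext k
  simp only [coeff_add, coeff_mul_X_pow', coeff_C_mul, coeff_derivative]
  match k with
  | 0 =>
    simp only [show ¬ (2 ≤ 0) by omega, show ¬ (1 ≤ 0) by omega, if_neg, if_false]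
    have h := skyP_coeff_rec n ω hω 0
    push_cast at h ⊢
    linear_combination h
  | 1 =>
    simp only [show ¬ (2 ≤ 1) by omega, if_false, if_pos le_rfl]
    norm_num
    have h := skyP_coeff_rec n ω hω 1
    push_cast at h ⊢
    linear_combination h
  | (k+2) =>
    rw [if_pos (by omega), if_pos (by omega)]
    have e1 : k + 2 - 2 = k := by omega
    have e2 : k + 2 - 1 = k + 1 := by omega
    rw [e1, e2]
    have h := skyP_coeff_rec n ω hω (k + 2)
    push_cast at h ⊢
    linear_combination h

lemma skyP_ode_iter (n : ℕ) (ω : ℝ) (hω : 0 < ω) (k : ℕ) :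
    X * (X + 1) * derivative^[k+2] (skyP n ω)
      + ((2 * (k : Polynomial ℂ) + Polynomial.C (ω : ℂ) + 2 - (n : Polynomial ℂ)) * X
          + ((k : Polynomial ℂ) + Polynomial.C (ω : ℂ) + 1 - (n : Polynomial ℂ)))
            * derivative^[k+1] (skyP n ω)
      + ((k : Polynomial ℂ) * ((k : Polynomial ℂ) + Polynomial.C (ω : ℂ) + 1 - (n : Polynomial ℂ)))
            * derivative^[k] (skyP n ω)
    = (n : Polynomial ℂ) * (Polynomial.C (ω : ℂ) + 1) * derivative^[k] (skyP n ω) := by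
  induction k with
  | zero =>
    have h := skyP_ode n ω hω
    simp only [map_add, map_sub, map_mul, map_one, map_ofNat, Polynomial.C_eq_natCast] at h
    simp only [Function.iterate_succ, Function.iterate_zero, Function.comp_apply, id_eq,
      Nat.cast_zero]
    linear_combination h
  | succ k ih =>
    have h := congrArg derivative ih
    simp only [derivative_add, derivative_sub, derivative_mul, derivative_X, derivative_one, derivative_C,
      derivative_natCast, derivative_ofNat, mul_zero, zero_mul, add_zero, zero_add, mul_one,
      ← Function.iterate_succ_apply'] at h
    push_cast
    linear_combination h

lemma sky_derivs_zero (n : ℕ) (ω : ℝ) (hω : 0 < ω) (z : ℂ) (hz : z ≠ 0)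
    (h0 : (skyP n ω).eval z = 0) (h1 : (derivative (skyP n ω)).eval z = 0) :
    ∀ k, ((derivative^[k] (skyP n ω))).eval z = 0 := by
  set s : ℕ → ℂ := fun k => (derivative^[k] (skyP n ω)).eval z with hs
  have key : ∀ k, z * (z + 1) * s (k+2)
      + ((2 * (k : ℂ) + ω + 2 - n) * z + ((k : ℂ) + ω + 1 - n)) * s (k+1)
      + (k : ℂ) * ((k : ℂ) + ω + 1 - n) * s k = (n : ℂ) * ((ω : ℂ) + 1) * s k := by
    intro k
    have h := congrArg (Polynomial.eval z) (skyP_ode_iter n ω hω k)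
    simpa only [eval_add, eval_sub, eval_mul, eval_X, eval_C, eval_one, eval_natCast,
      eval_ofNat] using h
  have main : ∀ k, s k = 0 ∧ s (k+1) = 0 := by
    intro k
    induction k with
    | zero =>
      refine ⟨h0, ?_⟩
      simpa [hs] using h1
    | succ k ih =>
      refine ⟨ih.2, ?_⟩
      by_cases hz1 : z = -1
      · have hk := key (k+1)
        rw [hz1] at hk
        have h2 : ((k : ℂ) + 2) * s (k+1+1) = 0 := by
          push_cast at hk
          linear_combination (-1 : ℂ) * hk
            + (((k:ℂ)+1) * ((k:ℂ)+1+ω+1-n) - (n:ℂ)*((ω:ℂ)+1)) * ih.2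
        have hne : ((k : ℂ) + 2) ≠ 0 := by
          have : ((k + 2 : ℕ) : ℂ) ≠ 0 := Nat.cast_ne_zero.mpr (by omega)
          push_cast at this; exact this
        exact (mul_eq_zero.mp h2).resolve_left hne
      · have hk := key k
        have h2 : z * (z + 1) * s (k+2) = 0 := by
          linear_combination hk
            - ((2 * (k : ℂ) + ω + 2 - n) * z + ((k : ℂ) + ω + 1 - n)) * ih.2
            - ((k : ℂ) * ((k : ℂ) + ω + 1 - n) - (n : ℂ) * ((ω : ℂ) + 1)) * ih.1
        have hz1' : z + 1 ≠ 0 := fun h => hz1 (by linear_combination h)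
        rcases mul_eq_zero.mp h2 with h3 | h3
        · rcases mul_eq_zero.mp h3 with h4 | h4
          · exact absurd h4 hz
          · exact absurd h4 hz1'
        · exact h3
  exact fun k => (main k).1

lemma skyP_ne_zero (n : ℕ) (ω : ℝ) : skyP n ω ≠ 0 := by
  intro h
  have hc := skyP_coeff n ω n
  rw [h] at hc
  simp [skyA, Nat.sub_self] at hc

theorem skyburst_zeros_simple' (ω : ℝ) (hω : 0 < ω) (n : ℕ) (hn : 1 ≤ n)
    (z : ℂ) (hz : z ≠ 0) (h0 : (skyP n ω).eval z = 0)
    (h1 : (derivative (skyP n ω)).eval z = 0) : False := by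
  have hall := sky_derivs_zero n ω hω z hz h0 h1
  have hP0 : skyP n ω = 0 := by
    apply Polynomial.eq_zero_of_hasseDeriv_eq_zero _ z
    intro k
    have hk := congrFun (Polynomial.factorial_smul_hasseDeriv (R := ℂ) (k := k)) (skyP n ω)
    have := congrArg (Polynomial.eval z) hk
    simp only [LinearMap.smul_apply, smul_eq_mul, Polynomial.eval_smul] at this
    rw [hall k] at this
    have hfac : ((Nat.factorial k : ℕ) : ℂ) ≠ 0 := Nat.cast_ne_zero.mpr k.factorial_ne_zero
    rw [nsmul_eq_mul] at this
    exact (mul_eq_zero.mp this).resolve_left hfac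
  exact skyP_ne_zero n ω hP0

lemma skyP_eval (n : ℕ) (ω : ℝ) (z : ℂ) : (skyP n ω).eval z = skyburst n ω z := by
  rw [skyP, skyburst, eval_finset_sum, ← Finset.sum_range_reflect]
  apply Finset.sum_congr rfl
  intro k hk
  simp only [Finset.mem_range, Nat.add_sub_cancel] at *
  rw [Nat.sub_sub_self (Nat.lt_succ_iff.mp hk)]
  simp [skyA]

theorem skyburst_zeros_simple (ω : ℝ) (hω : 0 < ω) (n : ℕ) (hn : 1 ≤ n)
    (z : ℂ) (hz : z ≠ 0) (h0 : skyburst n ω z = 0) :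
    deriv (skyburst n ω) z ≠ 0 := by
  intro hder
  have hfun : skyburst n ω = fun w => (skyP n ω).eval w :=
    funext fun w => (skyP_eval n ω w).symm
  apply skyburst_zeros_simple' ω hω n hn z hz
  · rw [skyP_eval]; exact h0
  · rw [← Polynomial.deriv]
    rw [hfun] at hder
    exact hder
end
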